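/- For every a > 0 and every function f : ℝ → ℝ that is continuously differentiable on a neighborhood of [−a, a], one has ∫_{−a}^{a} f(t)² dt ≤ 5 ∫_{−a/2}^{a/2} f(t)² dt + 4 ∫_{−a}^{a} r(t)² f′(t)² dt, where r(t) = t + a for t ∈ (−a, 0) and r(t) = a − t for t ∈ [0, a) (i.e., r(t) = a − |t|). -/

import Mathlib

open MeasureTheory intervalIntegral

open Set

private lemma key_ineq (a : ℝ) (ha : 0 < a) (f f' : ℝ → ℝ)
    (hd : ∀ t ∈ Set.Icc (0:ℝ) a, HasDerivAt f (f' t) t)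
    (hc' : ContinuousOn f' (Set.Icc 0 a)) :
    ∫ t in (a/2)..a, (f t) ^ 2 ≤
      3 * (∫ t in (0:ℝ)..(a/2), (f t) ^ 2) +
        4 * ∫ t in (0:ℝ)..a, (a - t) ^ 2 * (f' t) ^ 2 := by
  have h1 : a/2 ≤ a := by linarith
  have h0 : (0:ℝ) ≤ a/2 := by linarith
  have hc : ContinuousOn f (Set.Icc 0 a) := fun t ht =>
    (hd t ht).continuousAt.continuousWithinAt
  have hsub1 : uIcc (a/2) a ⊆ Icc (0:ℝ) a := by
    rw [uIcc_of_le h1]; exact Icc_subset_Icc h0 le_rfl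
  have hsub2 : uIcc (0:ℝ) (a/2) ⊆ Icc (0:ℝ) a := by
    rw [uIcc_of_le h0]; exact Icc_subset_Icc le_rfl h1
  -- integrable pieces
  have if2_1 : IntervalIntegrable (fun t => (f t) ^ 2) volume (a/2) a :=
    ((hc.mono hsub1).pow 2).intervalIntegrable
  have if2_2 : IntervalIntegrable (fun t => (f t) ^ 2) volume 0 (a/2) :=
    ((hc.mono hsub2).pow 2).intervalIntegrable
  have igp : IntervalIntegrable (fun t => (a - t) * (2 * f t * f' t)) volume (a/2) a :=
    ((continuousOn_const.sub continuousOn_id).mul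
      ((continuousOn_const.mul (hc.mono hsub1)).mul (hc'.mono hsub1))).intervalIntegrable
  have ig0 : IntervalIntegrable (fun t => t * (2 * f t * f' t)) volume 0 (a/2) :=
    (continuousOn_id.mul
      ((continuousOn_const.mul (hc.mono hsub2)).mul (hc'.mono hsub2))).intervalIntegrable
  have iw1 : IntervalIntegrable (fun t => (a - t) ^ 2 * (f' t) ^ 2) volume (a/2) a :=
    (((continuousOn_const.sub continuousOn_id).pow 2).mul
      ((hc'.mono hsub1).pow 2)).intervalIntegrable
  have iw2 : IntervalIntegrable (fun t => (a - t) ^ 2 * (f' t) ^ 2) volume 0 (a/2) :=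
    (((continuousOn_const.sub continuousOn_id).pow 2).mul
      ((hc'.mono hsub2).pow 2)).intervalIntegrable
  -- first integration by parts identity on [a/2, a]
  have hFder : ∀ t ∈ uIcc (a/2) a,
      HasDerivAt (fun t => (a - t) * (f t) ^ 2)
        (-(f t) ^ 2 + (a - t) * (2 * f t * f' t)) t := by
    intro t ht
    have h := ((hasDerivAt_id t).const_sub a).mul ((hd t (hsub1 ht)).pow 2)
    refine h.congr_deriv ?_
    simp only [id_eq, Pi.pow_apply]
    push_cast
    ring
  have I1 : ∫ t in (a/2)..a, (-(f t) ^ 2 + (a - t) * (2 * f t * f' t))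
      = (a - a) * (f a) ^ 2 - (a - a/2) * (f (a/2)) ^ 2 :=
    integral_eq_sub_of_hasDerivAt hFder (if2_1.neg.add igp)
  have I1' : ∫ t in (a/2)..a, (-(f t) ^ 2 + (a - t) * (2 * f t * f' t))
      = -(∫ t in (a/2)..a, (f t) ^ 2) + ∫ t in (a/2)..a, (a - t) * (2 * f t * f' t) := by
    rw [integral_add (f := fun t => -(f t) ^ 2) (((hc.mono hsub1).pow 2).neg.intervalIntegrable) igp, intervalIntegral.integral_neg]
  have hval1 : (a - a) * (f a) ^ 2 - (a - a/2) * (f (a/2)) ^ 2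
      = -((a/2) * (f (a/2)) ^ 2) := by ring
  -- second identity on [0, a/2]
  have hGder : ∀ t ∈ uIcc (0:ℝ) (a/2),
      HasDerivAt (fun t => t * (f t) ^ 2)
        ((f t) ^ 2 + t * (2 * f t * f' t)) t := by
    intro t ht
    have h := (hasDerivAt_id t).mul ((hd t (hsub2 ht)).pow 2)
    refine h.congr_deriv ?_
    simp only [id_eq, Pi.pow_apply]
    push_cast
    ring
  have I2 : ∫ t in (0:ℝ)..(a/2), ((f t) ^ 2 + t * (2 * f t * f' t))
      = (a/2) * (f (a/2)) ^ 2 - 0 * (f 0) ^ 2 :=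
    integral_eq_sub_of_hasDerivAt hGder (if2_2.add ig0)
  have I2' : ∫ t in (0:ℝ)..(a/2), ((f t) ^ 2 + t * (2 * f t * f' t))
      = (∫ t in (0:ℝ)..(a/2), (f t) ^ 2) + ∫ t in (0:ℝ)..(a/2), t * (2 * f t * f' t) := by
    rw [integral_add if2_2 ig0]
  -- pointwise bounds
  have B1 : ∫ t in (a/2)..a, (a - t) * (2 * f t * f' t)
      ≤ ∫ t in (a/2)..a, ((1/2) * (f t) ^ 2 + 2 * ((a - t) ^ 2 * (f' t) ^ 2)) := by
    apply integral_mono_on h1 igp ((if2_1.const_mul (1/2)).add (iw1.const_mul 2))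
    intro t ht
    nlinarith [sq_nonneg (f t - 2 * (a - t) * f' t)]
  have B2 : ∫ t in (0:ℝ)..(a/2), t * (2 * f t * f' t)
      ≤ ∫ t in (0:ℝ)..(a/2), ((1/2) * (f t) ^ 2 + 2 * ((a - t) ^ 2 * (f' t) ^ 2)) := by
    apply integral_mono_on h0 ig0 ((if2_2.const_mul (1/2)).add (iw2.const_mul 2))
    intro t ht
    have ht1 : 0 ≤ t := ht.1
    have ht2 : t ≤ a / 2 := ht.2
    have hle : t ^ 2 ≤ (a - t) ^ 2 := by nlinarith
    nlinarith [sq_nonneg (f t - 2 * t * f' t), mul_nonneg (sub_nonneg.2 hle) (sq_nonneg (f' t))]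
  -- split bound integrals
  have S1 : ∫ t in (a/2)..a, ((1/2) * (f t) ^ 2 + 2 * ((a - t) ^ 2 * (f' t) ^ 2))
      = (1/2) * (∫ t in (a/2)..a, (f t) ^ 2)
        + 2 * ∫ t in (a/2)..a, (a - t) ^ 2 * (f' t) ^ 2 := by
    rw [integral_add (if2_1.const_mul (1/2)) (iw1.const_mul 2),
      intervalIntegral.integral_const_mul, intervalIntegral.integral_const_mul]
  have S2 : ∫ t in (0:ℝ)..(a/2), ((1/2) * (f t) ^ 2 + 2 * ((a - t) ^ 2 * (f' t) ^ 2))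
      = (1/2) * (∫ t in (0:ℝ)..(a/2), (f t) ^ 2)
        + 2 * ∫ t in (0:ℝ)..(a/2), (a - t) ^ 2 * (f' t) ^ 2 := by
    rw [integral_add (if2_2.const_mul (1/2)) (iw2.const_mul 2),
      intervalIntegral.integral_const_mul, intervalIntegral.integral_const_mul]
  have Wsplit : (∫ t in (0:ℝ)..(a/2), (a - t) ^ 2 * (f' t) ^ 2)
      + (∫ t in (a/2)..a, (a - t) ^ 2 * (f' t) ^ 2)
      = ∫ t in (0:ℝ)..a, (a - t) ^ 2 * (f' t) ^ 2 :=
    integral_add_adjacent_intervals iw2 iw1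
  linarith

/-- One-dimensional weighted Poincaré-type inequality: for every `a > 0` and every `f : ℝ → ℝ`
continuously differentiable on a neighborhood of `[-a, a]`,
`∫_{-a}^{a} f² ≤ 5 ∫_{-a/2}^{a/2} f² + 4 ∫_{-a}^{a} (a - |t|)² f'(t)² dt`,
where `r(t) = a - |t|` (i.e. `r(t) = t + a` on `(-a,0)` and `r(t) = a - t` on `[0,a)`). -/
theorem stmt_8 (a : ℝ) (ha : 0 < a) (f : ℝ → ℝ)
    (hf : ∃ U : Set ℝ, IsOpen U ∧ Set.Icc (-a) a ⊆ U ∧ ContDiffOn ℝ 1 f U) :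
    ∫ t in (-a)..a, (f t) ^ 2 ≤
      5 * (∫ t in (-a/2)..(a/2), (f t) ^ 2) +
        4 * ∫ t in (-a)..a, (a - |t|) ^ 2 * (deriv f t) ^ 2 := by
  obtain ⟨U, hUo, hUs, hfU⟩ := hf
  have hdAll : ∀ t ∈ Set.Icc (-a) a, HasDerivAt f (deriv f t) t := fun t ht =>
    ((hfU.differentiableOn one_ne_zero).differentiableAt (hUo.mem_nhds (hUs ht))).hasDerivAt
  have hc'All : ContinuousOn (deriv f) (Set.Icc (-a) a) :=
    (hfU.continuousOn_deriv_of_isOpen hUo le_rfl).mono hUs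
  have hcAll : ContinuousOn f (Set.Icc (-a) a) := fun t ht =>
    (hdAll t ht).continuousAt.continuousWithinAt
  -- positive side
  have hP := key_ineq a ha f (deriv f)
      (fun t ht => hdAll t ⟨by linarith [ht.1], ht.2⟩)
      (hc'All.mono (Icc_subset_Icc (by linarith) le_rfl))
  -- negative side, by reflection
  have hmem : ∀ t ∈ Set.Icc (0:ℝ) a, -t ∈ Set.Icc (-a) a := fun t ht =>
    ⟨by linarith [ht.2], by linarith [ht.1]⟩
  have hdN : ∀ t ∈ Set.Icc (0:ℝ) a,
      HasDerivAt (fun s => f (-s)) (-(deriv f (-t))) t := by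
    intro t ht
    have h := (hdAll (-t) (hmem t ht)).comp t (hasDerivAt_neg t)
    refine h.congr_deriv ?_
    ring
  have hcN : ContinuousOn (fun t : ℝ => -(deriv f (-t))) (Set.Icc 0 a) :=
    (hc'All.comp continuous_neg.continuousOn hmem).neg
  have hQ := key_ineq a ha (fun s => f (-s)) (fun t => -(deriv f (-t))) hdN hcN
  -- rewrite the reflected integrals
  have q1 : (∫ t in (a/2)..a, (f (-t)) ^ 2) = ∫ t in (-a)..(-(a/2)), (f t) ^ 2 :=
    integral_comp_neg (fun t => (f t) ^ 2)
  have q2 : (∫ t in (0:ℝ)..(a/2), (f (-t)) ^ 2) = ∫ t in (-(a/2))..0, (f t) ^ 2 := by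
    have := integral_comp_neg (a := (0:ℝ)) (b := a/2) (fun t => (f t) ^ 2)
    simpa using this
  have q3 : (∫ t in (0:ℝ)..a, (a - t) ^ 2 * (-(deriv f (-t))) ^ 2)
      = ∫ t in (-a)..0, (a + t) ^ 2 * (deriv f t) ^ 2 := by
    have h2 := integral_comp_neg (a := (0:ℝ)) (b := a)
      (fun t => (a + t) ^ 2 * (deriv f t) ^ 2)
    have h1 : (∫ t in (0:ℝ)..a, (a - t) ^ 2 * (-(deriv f (-t))) ^ 2)
        = ∫ t in (0:ℝ)..a, (fun s => (a + s) ^ 2 * (deriv f s) ^ 2) (-t) :=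
      integral_congr (fun t _ => by simp only; ring)
    rw [h1, h2, neg_zero]
  rw [q1, q2, q3] at hQ
  -- integrability helpers
  have mkf2 : ∀ {c d : ℝ}, Set.uIcc c d ⊆ Set.Icc (-a) a →
      IntervalIntegrable (fun t => (f t) ^ 2) volume c d := fun h =>
    ((hcAll.mono h).pow 2).intervalIntegrable
  have mkw : ∀ {c d : ℝ}, Set.uIcc c d ⊆ Set.Icc (-a) a →
      IntervalIntegrable (fun t => (a - |t|) ^ 2 * (deriv f t) ^ 2) volume c d := fun h =>
    (((continuousOn_const.sub continuous_abs.continuousOn).pow 2).mul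
      ((hc'All.mono h).pow 2)).intervalIntegrable
  have hu : ∀ {c d : ℝ}, -a ≤ c → c ≤ d → d ≤ a → Set.uIcc c d ⊆ Set.Icc (-a) a := by
    intro c d h1 h2 h3
    rw [Set.uIcc_of_le h2]
    exact Set.Icc_subset_Icc h1 h3
  -- split ∫_{-a}^a f² into three pieces
  have sp1 : (∫ t in (-a)..(-(a/2)), (f t) ^ 2) + (∫ t in (-(a/2))..(a/2), (f t) ^ 2)
      = ∫ t in (-a)..(a/2), (f t) ^ 2 :=
    integral_add_adjacent_intervals
      (mkf2 (hu le_rfl (by linarith) (by linarith)))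
      (mkf2 (hu (by linarith) (by linarith) (by linarith)))
  have sp2 : (∫ t in (-a)..(a/2), (f t) ^ 2) + (∫ t in (a/2)..a, (f t) ^ 2)
      = ∫ t in (-a)..a, (f t) ^ 2 :=
    integral_add_adjacent_intervals
      (mkf2 (hu le_rfl (by linarith) (by linarith)))
      (mkf2 (hu (by linarith) (by linarith) le_rfl))
  have sp3 : (∫ t in (-(a/2))..0, (f t) ^ 2) + (∫ t in (0:ℝ)..(a/2), (f t) ^ 2)
      = ∫ t in (-(a/2))..(a/2), (f t) ^ 2 :=
    integral_add_adjacent_intervals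
      (mkf2 (hu (by linarith) (by linarith) (by linarith)))
      (mkf2 (hu (by linarith) (by linarith) (by linarith)))
  -- the weight integral
  have w1 : (∫ t in (-a)..0, (a - |t|) ^ 2 * (deriv f t) ^ 2)
      = ∫ t in (-a)..0, (a + t) ^ 2 * (deriv f t) ^ 2 := by
    apply integral_congr
    intro t ht
    rw [Set.uIcc_of_le (by linarith : -a ≤ (0:ℝ))] at ht
    simp only
    rw [abs_of_nonpos ht.2]
    ring
  have w2 : (∫ t in (0:ℝ)..a, (a - |t|) ^ 2 * (deriv f t) ^ 2)
      = ∫ t in (0:ℝ)..a, (a - t) ^ 2 * (deriv f t) ^ 2 := by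
    apply integral_congr
    intro t ht
    rw [Set.uIcc_of_le ha.le] at ht
    simp only
    rw [abs_of_nonneg ht.1]
  have wsp : (∫ t in (-a)..0, (a - |t|) ^ 2 * (deriv f t) ^ 2)
      + (∫ t in (0:ℝ)..a, (a - |t|) ^ 2 * (deriv f t) ^ 2)
      = ∫ t in (-a)..a, (a - |t|) ^ 2 * (deriv f t) ^ 2 :=
    integral_add_adjacent_intervals
      (mkw (hu le_rfl (by linarith) ha.le))
      (mkw (hu (by linarith) ha.le le_rfl))
  -- nonnegativity
  have n1 : 0 ≤ ∫ t in (-(a/2))..(a/2), (f t) ^ 2 :=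
    integral_nonneg (by linarith) (fun u _ => sq_nonneg _)
  -- fix -a/2 vs -(a/2)
  have e1 : -a/2 = -(a/2) := by ring
  rw [e1]
  linarith [hP, hQ, sp1, sp2, sp3, w1, w2, wsp, n1]
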